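/- Let z_1,…,z_r ∈ ℤ^d be generating vectors and n_1,…,n_r ≥ 1 integer moduli, let A ⊂ ℤ^d be an anti-aliasing set, and let û : ℤ^d → ℂ be absolutely summable. Then ( Σ_{h ∈ ℤ^d∖A} |û(h)|² + Σ_{h ∈ A} | Σ_{ℓ ∈ Λ^⊥, ℓ ≠ 0} û(h + ℓ) |² )^{1/2} ≤ 2 · Σ_{h ∈ ℤ^d∖A} |û(h)|. (By Parseval's identity, the left-hand side equals the L₂(𝕋^d) norm of u − I u, where u is the function with Fourier coefficients û and I u is its trigonometric interpolant on the lattice points with frequencies in A.) -/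
import Mathlib


noncomputable section

/-- Integer dot product on `ℤ^d`. -/
def dotZ {d : ℕ} (h z : Fin d → ℤ) : ℤ := ∑ i, h i * z i

/-- Membership in the dual lattice `Λ^⊥`. -/
def InDual {d r : ℕ} (z : Fin r → Fin d → ℤ) (n : Fin r → ℕ) (h : Fin d → ℤ) : Prop :=
  ∀ j, (n j : ℤ) ∣ dotZ h (z j)

/-- **Truncation/aliasing L₂ bound.** For an anti-aliasing set `A` and
absolutely summable coefficients `û`,
`(Σ_{h ∉ A} |û(h)|² + Σ_{h ∈ A} |Σ_{0 ≠ ℓ ∈ Λ^⊥} û(h+ℓ)|²)^{1/2}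
  ≤ 2 Σ_{h ∉ A} |û(h)|`.
By Parseval, the left-hand side is the `L₂(𝕋^d)` norm of `u − I u` where `I u`
is the trigonometric interpolant on the lattice with frequencies in `A`. -/
theorem truncation_interpolation_bound
    (d r : ℕ) (hr : 1 ≤ r)
    (z : Fin r → Fin d → ℤ) (n : Fin r → ℕ) (hn : ∀ j, 1 ≤ n j)
    (A : Finset (Fin d → ℤ))
    (hA : ∀ h ∈ A, ∀ h' ∈ A, h ≠ h' → ¬ InDual z n (h - h'))
    (uhat : (Fin d → ℤ) → ℂ) (hu : Summable fun m : Fin d → ℤ => ‖uhat m‖) :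
    Real.sqrt
        ((∑' h : {h : Fin d → ℤ // h ∉ A}, ‖uhat h.1‖ ^ 2) +
          ∑ h ∈ A,
            ‖∑' ℓ : {ℓ : Fin d → ℤ // ℓ ≠ 0 ∧ InDual z n ℓ}, uhat (h + ℓ.1)‖ ^ 2)
      ≤ 2 * ∑' h : {h : Fin d → ℤ // h ∉ A}, ‖uhat h.1‖ := by
  classical
  set S : ℝ := ∑' h : {h : Fin d → ℤ // h ∉ A}, ‖uhat h.1‖ with hSdef
  have hSnn : 0 ≤ S := tsum_nonneg fun _ => norm_nonneg _
  have hKsum : Summable (fun h : {h : Fin d → ℤ // h ∉ A} => ‖uhat h.1‖) :=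
    hu.subtype _
  -- key anti-aliasing facts
  have key : ∀ hh ∈ A, ∀ ℓ : Fin d → ℤ, ℓ ≠ 0 → InDual z n ℓ → hh + ℓ ∉ A := by
    intro hh hmem ℓ hne hdual hc
    have hne' : hh + ℓ ≠ hh := by
      intro e
      apply hne
      have : hh + ℓ - hh = hh - hh := by rw [e]
      simpa using this
    have harg : hh + ℓ - hh = ℓ := by abel
    exact hA (hh + ℓ) hc hh hmem hne' (by rw [harg]; exact hdual)
  have keyinj :
      Function.Injective
        (fun p : (↥A) × {ℓ : Fin d → ℤ // ℓ ≠ 0 ∧ InDual z n ℓ} => p.1.1 + p.2.1) := by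
    rintro ⟨⟨h1, hm1⟩, ⟨l1, hl1⟩⟩ ⟨⟨h2, hm2⟩, ⟨l2, hl2⟩⟩ he
    simp only at he
    by_cases hhh : h1 = h2
    · subst hhh
      have : l1 = l2 := by
        have := he
        simpa [add_right_inj] using this
      simp [this]
    · exfalso
      have hdual : InDual z n (h1 - h2) := by
        have h12 : h1 - h2 = l2 - l1 := by
          have := he
          apply sub_eq_sub_iff_add_eq_add.mpr
          linear_combination this
        rw [h12]
        intro j
        have hsub : dotZ (l2 - l1) (z j) = dotZ l2 (z j) - dotZ l1 (z j) := by
          simp [dotZ, sub_mul, Finset.sum_sub_distrib]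
        rw [hsub]
        exact dvd_sub (hl2.2 j) (hl1.2 j)
      exact hA h1 hm1 h2 hm2 hhh hdual
  -- embedding into the complement of A
  set E : (↥A) × {ℓ : Fin d → ℤ // ℓ ≠ 0 ∧ InDual z n ℓ} → {h : Fin d → ℤ // h ∉ A} :=
    fun p => ⟨p.1.1 + p.2.1, key p.1.1 p.1.2 p.2.1 p.2.2.1 p.2.2.2⟩ with hEdef
  have hEinj : Function.Injective E := by
    intro p q hpq
    exact keyinj (congrArg Subtype.val hpq)
  have hPsum : Summable (fun p : (↥A) × {ℓ : Fin d → ℤ // ℓ ≠ 0 ∧ InDual z n ℓ} =>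
      ‖uhat (p.1.1 + p.2.1)‖) := hu.comp_injective keyinj
  -- per-h inner sums
  have hLsum : ∀ hh : Fin d → ℤ,
      Summable (fun ℓ : {ℓ : Fin d → ℤ // ℓ ≠ 0 ∧ InDual z n ℓ} => ‖uhat (hh + ℓ.1)‖) := by
    intro hh
    have hinj : Function.Injective
        (fun ℓ : {ℓ : Fin d → ℤ // ℓ ≠ 0 ∧ InDual z n ℓ} => hh + ℓ.1) := by
      intro a b hab
      have : a.1 = b.1 := by simpa [add_right_inj] using hab
      exact Subtype.ext this
    exact hu.comp_injective hinj
  have hB : ∀ hh : Fin d → ℤ,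
      ‖∑' ℓ : {ℓ : Fin d → ℤ // ℓ ≠ 0 ∧ InDual z n ℓ}, uhat (hh + ℓ.1)‖ ≤
        ∑' ℓ : {ℓ : Fin d → ℤ // ℓ ≠ 0 ∧ InDual z n ℓ}, ‖uhat (hh + ℓ.1)‖ :=
    fun hh => norm_tsum_le_tsum_norm (hLsum hh)
  have hBle : ∀ hh ∈ A,
      (∑' ℓ : {ℓ : Fin d → ℤ // ℓ ≠ 0 ∧ InDual z n ℓ}, ‖uhat (hh + ℓ.1)‖) ≤ S := by
    intro hh hmem
    refine Summable.tsum_le_tsum_of_inj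
      (fun ℓ : {ℓ : Fin d → ℤ // ℓ ≠ 0 ∧ InDual z n ℓ} =>
        (⟨hh + ℓ.1, key hh hmem ℓ.1 ℓ.2.1 ℓ.2.2⟩ : {h : Fin d → ℤ // h ∉ A}))
      ?_ (fun _ _ => norm_nonneg _) (fun ℓ => le_refl _) (hLsum hh) hKsum
    intro a b hab
    have : hh + a.1 = hh + b.1 := congrArg Subtype.val hab
    exact Subtype.ext (by simpa [add_right_inj] using this)
  -- sum over A of the inner absolute sums is ≤ S
  have hC : (∑ hh ∈ A, ∑' ℓ : {ℓ : Fin d → ℤ // ℓ ≠ 0 ∧ InDual z n ℓ}, ‖uhat (hh + ℓ.1)‖)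
      ≤ S := by
    have e1 : (∑ hh ∈ A, ∑' ℓ : {ℓ : Fin d → ℤ // ℓ ≠ 0 ∧ InDual z n ℓ}, ‖uhat (hh + ℓ.1)‖)
        = ∑' hh : ↥A, ∑' ℓ : {ℓ : Fin d → ℤ // ℓ ≠ 0 ∧ InDual z n ℓ}, ‖uhat (hh.1 + ℓ.1)‖ :=
      (Finset.tsum_subtype A _).symm
    have e2 : (∑' p : (↥A) × {ℓ : Fin d → ℤ // ℓ ≠ 0 ∧ InDual z n ℓ}, ‖uhat (p.1.1 + p.2.1)‖)
        = ∑' hh : ↥A, ∑' ℓ : {ℓ : Fin d → ℤ // ℓ ≠ 0 ∧ InDual z n ℓ}, ‖uhat (hh.1 + ℓ.1)‖ :=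
      Summable.tsum_prod' hPsum (fun hh => hLsum hh.1)
    rw [e1, ← e2]
    refine Summable.tsum_le_tsum_of_inj E hEinj (fun _ _ => norm_nonneg _)
      (fun p => le_refl _) hPsum hKsum
  -- bound each part by S^2
  have part1 : (∑' h : {h : Fin d → ℤ // h ∉ A}, ‖uhat h.1‖ ^ 2) ≤ S ^ 2 := by
    have hterm : ∀ h : {h : Fin d → ℤ // h ∉ A}, ‖uhat h.1‖ ^ 2 ≤ ‖uhat h.1‖ * S := by
      intro h
      have hle : ‖uhat h.1‖ ≤ S := Summable.le_tsum hKsum h (fun _ _ => norm_nonneg _)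
      have := mul_le_mul_of_nonneg_left hle (norm_nonneg (uhat h.1))
      simpa [sq] using this
    have hsq : Summable (fun h : {h : Fin d → ℤ // h ∉ A} => ‖uhat h.1‖ ^ 2) := by
      refine Summable.of_nonneg_of_le (fun _ => by positivity) hterm ?_
      exact hKsum.mul_right S
    calc (∑' h : {h : Fin d → ℤ // h ∉ A}, ‖uhat h.1‖ ^ 2)
        ≤ ∑' h : {h : Fin d → ℤ // h ∉ A}, ‖uhat h.1‖ * S :=
          Summable.tsum_le_tsum hterm hsq (hKsum.mul_right S)
      _ = S * S := by rw [tsum_mul_right]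
      _ = S ^ 2 := (sq S).symm
  have part2 : (∑ h ∈ A,
      ‖∑' ℓ : {ℓ : Fin d → ℤ // ℓ ≠ 0 ∧ InDual z n ℓ}, uhat (h + ℓ.1)‖ ^ 2) ≤ S ^ 2 := by
    have step : ∀ h ∈ A,
        ‖∑' ℓ : {ℓ : Fin d → ℤ // ℓ ≠ 0 ∧ InDual z n ℓ}, uhat (h + ℓ.1)‖ ^ 2 ≤
          (∑' ℓ : {ℓ : Fin d → ℤ // ℓ ≠ 0 ∧ InDual z n ℓ}, ‖uhat (h + ℓ.1)‖) * S := by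
      intro h hmem
      have h1 := hB h
      have h2 := hBle h hmem
      have hn1 : (0:ℝ) ≤ ‖∑' ℓ : {ℓ : Fin d → ℤ // ℓ ≠ 0 ∧ InDual z n ℓ}, uhat (h + ℓ.1)‖ :=
        norm_nonneg _
      calc ‖∑' ℓ : {ℓ : Fin d → ℤ // ℓ ≠ 0 ∧ InDual z n ℓ}, uhat (h + ℓ.1)‖ ^ 2
          ≤ (∑' ℓ : {ℓ : Fin d → ℤ // ℓ ≠ 0 ∧ InDual z n ℓ}, ‖uhat (h + ℓ.1)‖) *
            (∑' ℓ : {ℓ : Fin d → ℤ // ℓ ≠ 0 ∧ InDual z n ℓ}, ‖uhat (h + ℓ.1)‖) := by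
            rw [sq]
            exact mul_le_mul h1 h1 hn1 ((norm_nonneg _).trans h1)
        _ ≤ (∑' ℓ : {ℓ : Fin d → ℤ // ℓ ≠ 0 ∧ InDual z n ℓ}, ‖uhat (h + ℓ.1)‖) * S :=
            mul_le_mul_of_nonneg_left h2 ((norm_nonneg _).trans h1)
    calc (∑ h ∈ A,
          ‖∑' ℓ : {ℓ : Fin d → ℤ // ℓ ≠ 0 ∧ InDual z n ℓ}, uhat (h + ℓ.1)‖ ^ 2)
        ≤ ∑ h ∈ A,
            (∑' ℓ : {ℓ : Fin d → ℤ // ℓ ≠ 0 ∧ InDual z n ℓ}, ‖uhat (h + ℓ.1)‖) * S :=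
          Finset.sum_le_sum step
      _ = (∑ h ∈ A, ∑' ℓ : {ℓ : Fin d → ℤ // ℓ ≠ 0 ∧ InDual z n ℓ}, ‖uhat (h + ℓ.1)‖) * S :=
          (Finset.sum_mul _ _ _).symm
      _ ≤ S * S := mul_le_mul_of_nonneg_right hC hSnn
      _ = S ^ 2 := (sq S).symm
  have htot : (∑' h : {h : Fin d → ℤ // h ∉ A}, ‖uhat h.1‖ ^ 2) +
      (∑ h ∈ A,
        ‖∑' ℓ : {ℓ : Fin d → ℤ // ℓ ≠ 0 ∧ InDual z n ℓ}, uhat (h + ℓ.1)‖ ^ 2)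
      ≤ (2 * S) ^ 2 := by nlinarith
  calc Real.sqrt _ ≤ Real.sqrt ((2 * S) ^ 2) := Real.sqrt_le_sqrt htot
    _ = 2 * S := Real.sqrt_sq (by positivity)

end
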